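/- arXiv:2309.05152 — 2 statements merged into one kernel-verified Lean document; each statement's English description precedes it below -/
import Mathlib

section
/- Let R be a Noetherian integrally closed integral domain with fraction field K. Then R equals the intersection, inside K, of its localizations at all height-one prime ideals: R = ⋂_{ht p = 1} R_p. Equivalently (algebraic Hartogs' lemma), if U ⊆ Spec R is an open subset whose complement contains no prime of height ≤ 1, then restriction of functions O(Spec R) → O(U) is bijective. -/
open IsLocalRing
open scoped nonZeroDivisors

/-- The "ideal of denominators" of an element `y` of a field `K` containing a ring `R`. -/
def den (R : Type*) [CommRing R] {K : Type*} [Field K] [Algebra R K] (y : K) : Ideal R where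
  carrier := {r : R | ∃ c : R, y * algebraMap R K r = algebraMap R K c}
  add_mem' := by
    rintro a b ⟨c, hc⟩ ⟨d, hd⟩
    exact ⟨c + d, by rw [map_add, map_add, mul_add, hc, hd]⟩
  zero_mem' := ⟨0, by simp⟩
  smul_mem' := by
    rintro r a ⟨c, hc⟩
    exact ⟨r * c, by rw [smul_eq_mul, map_mul, map_mul, mul_left_comm, hc]⟩

lemma mem_den {R : Type*} [CommRing R] {K : Type*} [Field K] [Algebra R K] {y : K} {r : R} :
    r ∈ den R y ↔ ∃ c : R, y * algebraMap R K r = algebraMap R K c := Iff.rfl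

/-- (Localization.AtPrime p) Noetherian integrally closed domain `R` is the intersection, inside its fraction field
`K`, of its localizations at all height-one primes: an element `x ∈ K` lies in (the image of)
`R` if and only if for every prime `p` of height one, `x` lies in `R_p`, i.e. `x` can be
written with denominator outside `p`. -/
theorem stmt4 {R : Type*} [CommRing R] [IsDomain R] [IsNoetherianRing R] [IsIntegrallyClosed R]
    {K : Type*} [Field K] [Algebra R K] [IsFractionRing R K] (x : K) :
    (∃ r : R, algebraMap R K r = x) ↔
      ∀ p : PrimeSpectrum R, Order.height p = 1 →
        ∃ a s : R, s ∉ p.asIdeal ∧ x * algebraMap R K s = algebraMap R K a := by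
  constructor
  · rintro ⟨r, rfl⟩ p hp
    exact ⟨r, 1, fun h => p.isPrime.ne_top ((Ideal.eq_top_iff_one _).mpr h), by simp⟩
  · intro hx
    by_contra hcon
    -- choose a maximal denominator ideal containing `den R x`
    obtain ⟨-, ⟨y, hy, hxy, rfl⟩, hmax⟩ :=
      (set_has_maximal_iff_noetherian.mpr inferInstance)
        {J : Ideal R | ∃ y : K, (¬∃ r : R, algebraMap R K r = y) ∧ den R x ≤ den R y ∧ J = den R y}
        ⟨den R x, x, hcon, le_rfl, rfl⟩
    -- `den R y` is prime
    have hptop : den R y ≠ ⊤ := by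
      intro h
      obtain ⟨c, hc⟩ := (mem_den).mp ((Ideal.eq_top_iff_one _).mp h)
      exact hy ⟨c, by simpa using hc.symm⟩
    haveI pp : (den R y).IsPrime := by
      refine ⟨hptop, ?_⟩
      rintro r s hrs
      by_contra h
      push_neg at h
      obtain ⟨hr, hs⟩ := h
      have hz : ¬∃ c : R, algebraMap R K c = y * algebraMap R K r := by
        rintro ⟨c, hc⟩; exact hr ⟨c, hc.symm⟩
      have hle : den R y ≤ den R (y * algebraMap R K r) := by
        rintro t ⟨c, hc⟩
        exact ⟨c * r, by rw [map_mul, mul_right_comm, hc]⟩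
      have heq : den R (y * algebraMap R K r) = den R y := by
        by_contra hne
        exact hmax (den R (y * algebraMap R K r)) ⟨_, hz, hxy.trans hle, rfl⟩
          (lt_of_le_of_ne hle (Ne.symm hne))
      obtain ⟨c, hc⟩ := hrs
      have : s ∈ den R (y * algebraMap R K r) :=
        ⟨c, by rw [mul_assoc, ← map_mul, hc]⟩
      exact hs (heq ▸ this)
    set p := den R y with hpdef
    -- setup the localization at p inside K
    have hple : p.primeCompl ≤ R⁰ := p.primeCompl_le_nonZeroDivisors
    let g : (Localization.AtPrime p) →+* K := IsLocalization.map K (RingHom.id R)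
      (le_trans hple (le_of_eq (Submonoid.comap_id _).symm))
    letI : Algebra (Localization.AtPrime p) K := g.toAlgebra
    haveI : IsScalarTower R (Localization.AtPrime p) K := IsScalarTower.of_algebraMap_eq'
      (by rw [RingHom.algebraMap_toAlgebra, IsLocalization.map_comp, RingHomCompTriple.comp_eq])
    haveI : IsFractionRing (Localization.AtPrime p) K :=
      IsFractionRing.isFractionRing_of_isDomain_of_isLocalization p.primeCompl (Localization.AtPrime p) K
    haveI : IsNoetherianRing (Localization.AtPrime p) := IsLocalization.isNoetherianRing p.primeCompl (Localization.AtPrime p) inferInstance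
    haveI : IsIntegrallyClosed (Localization.AtPrime p) := isIntegrallyClosed_of_isLocalization (Localization.AtPrime p) p.primeCompl hple
    -- y is not in A
    have hyA : ¬∃ z : (Localization.AtPrime p), algebraMap (Localization.AtPrime p) K z = y := by
      rintro ⟨z, hz⟩
      obtain ⟨⟨a, s⟩, hs⟩ := IsLocalization.surj p.primeCompl z
      have := congrArg (algebraMap (Localization.AtPrime p) K) hs
      rw [map_mul, ← IsScalarTower.algebraMap_apply, ← IsScalarTower.algebraMap_apply, hz] at this
      exact s.2 ⟨a, this⟩
    -- every element of the maximal ideal of (Localization.AtPrime p) multiplies y into A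
    have hmem : ∀ t ∈ maximalIdeal (Localization.AtPrime p), ∃ z : (Localization.AtPrime p), y * algebraMap (Localization.AtPrime p) K t = algebraMap (Localization.AtPrime p) K z := by
      intro t ht
      rw [← Localization.AtPrime.map_eq_maximalIdeal] at ht
      have hmap : Ideal.map (algebraMap R (Localization.AtPrime p)) p ≤ den (Localization.AtPrime p) y := by
        rw [Ideal.map_le_iff_le_comap]
        rintro r ⟨c, hc⟩
        refine ⟨algebraMap R (Localization.AtPrime p) c, ?_⟩
        rw [← IsScalarTower.algebraMap_apply, ← IsScalarTower.algebraMap_apply]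
        exact hc
      exact hmap ht
    -- p is nonzero
    obtain ⟨⟨a₀, s₀⟩, hs₀⟩ := IsLocalization.surj (M := R⁰) y
    have hs₀p : (s₀ : R) ∈ p := ⟨a₀, hs₀⟩
    have hs₀0 : (s₀ : R) ≠ 0 := nonZeroDivisors.ne_zero s₀.2
    -- the maximal ideal of (Localization.AtPrime p) is principal
    let M : Submodule (Localization.AtPrime p) K := Submodule.map (Algebra.linearMap (Localization.AtPrime p) K) (maximalIdeal (Localization.AtPrime p))
    have hprin : (maximalIdeal (Localization.AtPrime p)).IsPrincipal := by
      by_cases hcase : ∀ n ∈ M, y • n ∈ M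
      · exfalso
        have hint : IsIntegral (Localization.AtPrime p) y := by
          refine isIntegral_of_smul_mem_submodule M ?_ ?_ y hcase
          · rw [Submodule.ne_bot_iff]
            refine ⟨algebraMap (Localization.AtPrime p) K (algebraMap R (Localization.AtPrime p) s₀), ⟨algebraMap R (Localization.AtPrime p) s₀, ?_, rfl⟩, ?_⟩
            · rw [← Localization.AtPrime.map_eq_maximalIdeal]
              exact Ideal.mem_map_of_mem _ hs₀p
            · rw [← IsScalarTower.algebraMap_apply]
              exact (IsFractionRing.to_map_eq_zero_iff (K := K)).not.mpr hs₀0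
          · exact Submodule.FG.map _ (IsNoetherian.noetherian _)
        obtain ⟨z, hz⟩ := IsIntegrallyClosed.isIntegral_iff.mp hint
        exact hyA ⟨z, hz⟩
      · push_neg at hcase
        obtain ⟨n, hn, hyn⟩ := hcase
        obtain ⟨t, ht, rfl⟩ := hn
        obtain ⟨z, hz⟩ := hmem t ht
        have hzu : IsUnit z := by
          by_contra hzu
          exact hyn ⟨z, mem_maximalIdeal z |>.mpr hzu, by
            simp only [Algebra.linearMap_apply, smul_eq_mul]; exact hz.symm⟩
        obtain ⟨u, hu⟩ := hzu
        -- t' := u⁻¹ * t generates the maximal ideal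
        set t' : (Localization.AtPrime p) := ↑u⁻¹ * t with ht'def
        have ht' : t' ∈ maximalIdeal (Localization.AtPrime p) := (maximalIdeal (Localization.AtPrime p)).mul_mem_left _ ht
        have hyt' : y * algebraMap (Localization.AtPrime p) K t' = 1 := by
          rw [ht'def, map_mul, ← mul_assoc, mul_comm y, mul_assoc, hz, ← map_mul, ← hu,
            Units.inv_mul, map_one]
        refine ⟨⟨t', le_antisymm ?_ ?_⟩⟩
        · intro w hw
          obtain ⟨c, hc⟩ := hmem w hw
          have : algebraMap (Localization.AtPrime p) K w = algebraMap (Localization.AtPrime p) K (t' * c) := by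
            rw [map_mul, ← hc, ← mul_assoc, mul_comm (algebraMap (Localization.AtPrime p) K t') y, hyt', one_mul]
          rw [IsFractionRing.injective (Localization.AtPrime p) K this]
          exact Ideal.mem_span_singleton'.mpr ⟨c, mul_comm c t'⟩
        · exact (Ideal.span_singleton_le_iff_mem _).mpr ht'
    -- hence every nonzero prime of (Localization.AtPrime p) is maximal
    have htfae : (maximalIdeal (Localization.AtPrime p)).IsPrincipal ↔
        IsIntegrallyClosed (Localization.AtPrime p) ∧ ∀ P : Ideal (Localization.AtPrime p),
          P ≠ ⊥ → P.IsPrime → P = maximalIdeal (Localization.AtPrime p) :=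
      (tfae_of_isNoetherianRing_of_isLocalRing_of_isDomain (Localization.AtPrime p)).out 4 3
    have hprime := (htfae.mp hprin).2
    -- so p has height one
    set P : PrimeSpectrum R := ⟨p, pp⟩ with hPdef
    have hq : ∀ q : PrimeSpectrum R, q < P → q.asIdeal = ⊥ := by
      intro q hqP
      by_contra hqb
      have hqle : q.asIdeal ≤ p := le_of_lt hqP
      have hd : Disjoint (p.primeCompl : Set R) (q.asIdeal : Set R) := by
        rw [Set.disjoint_left]
        intro r hr hr'
        exact hr (hqle hr')
      have hQp : (Ideal.map (algebraMap R (Localization.AtPrime p)) q.asIdeal).IsPrime :=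
        IsLocalization.isPrime_of_isPrime_disjoint p.primeCompl (Localization.AtPrime p) q.asIdeal q.isPrime hd
      have hQb : Ideal.map (algebraMap R (Localization.AtPrime p)) q.asIdeal ≠ ⊥ := by
        intro h
        have : q.asIdeal ≤ Ideal.comap (algebraMap R (Localization.AtPrime p)) ⊥ := h ▸ Ideal.le_comap_map
        apply hqb
        rw [eq_bot_iff]
        intro r hr
        have : algebraMap R (Localization.AtPrime p) r = 0 := this hr
        have := IsLocalization.injective (Localization.AtPrime p) hple (this.trans (map_zero _).symm)
        simpa using this
      have := hprime _ hQb hQp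
      have hcomap : q.asIdeal = p := by
        have h1 := IsLocalization.comap_map_of_isPrime_disjoint p.primeCompl (Localization.AtPrime p)
          q.isPrime hd
        rw [this] at h1
        exact h1.symm.trans (by exact Localization.AtPrime.comap_maximalIdeal ..)
      exact absurd (PrimeSpectrum.ext hcomap) (ne_of_lt hqP)
    have hP1 : Order.height P = 1 := by
      have hle1 : Order.height P ≤ 1 := by
        rw [show (1 : ℕ∞) = ((1 : ℕ) : ℕ∞) from rfl, Order.height_le_coe_iff]
        intro q hqP
        have h0 : Order.height q = 0 := by
          rw [Order.height_eq_zero]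
          intro r hr
          have : r.asIdeal ≤ q.asIdeal := hr
          have hq0 := hq q hqP
          have : r.asIdeal = q.asIdeal := le_antisymm this (hq0 ▸ bot_le)
          exact le_of_eq (PrimeSpectrum.ext this.symm)
        rw [h0]
        exact_mod_cast zero_lt_one
      have hne0 : Order.height P ≠ 0 := by
        simp only [ne_eq, Order.height_eq_zero]
        intro hmin
        have hbotlt : (⟨⊥, Ideal.bot_prime⟩ : PrimeSpectrum R) < P := by
          refine lt_of_le_of_ne bot_le ?_
          intro h
          have : p = ⊥ := congrArg PrimeSpectrum.asIdeal h.symm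
          exact hs₀0 (by rw [← Ideal.mem_bot, ← this]; exact hs₀p)
        exact absurd (hmin (le_of_lt hbotlt)) hbotlt.not_ge
      exact le_antisymm hle1 (ENat.one_le_iff_ne_zero.mpr hne0)
    obtain ⟨a, s, hs, hxs⟩ := hx P hP1
    exact hs (hxy ⟨a, hxs⟩)
end

section
/- Let X be a scheme admitting a finite cover by affine open subschemes X_1, …, X_n. Let (R_i)_{i ∈ I} be an arbitrary family of commutative rings and, for each i, let f_i : Spec R_i → X be a morphism whose image is contained in some X_{j(i)}. Then there exists a morphism g : Spec(∏_{i ∈ I} R_i) → X such that for every i, the composite of g with the morphism Spec R_i → Spec(∏_{i ∈ I} R_i) induced by the coordinate projection ∏_i R_i → R_i equals f_i. -/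
open CategoryTheory AlgebraicGeometry
open CategoryTheory.Limits

/-- Let `X` be a scheme with a finite affine open cover `U₁, …, Uₙ`, `(Rᵢ)` an arbitrary family
of commutative rings, and `fᵢ : Spec Rᵢ → X` morphisms each of whose image lands in some member
of the cover.  Then there is a morphism `g : Spec (∏ i, Rᵢ) → X` whose composite with each
`Spec Rᵢ → Spec (∏ i, Rᵢ)` (induced by the coordinate projection) is `fᵢ`. -/
theorem stmt16 {I : Type} (R : I → Type) [∀ i, CommRing (R i)]
    (X : Scheme.{0}) (n : ℕ) (U : Fin n → X.Opens)
    (hU : ∀ j, IsAffineOpen (U j)) (hcover : (⨆ j, U j) = ⊤)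
    (f : ∀ i, Spec (CommRingCat.of (R i)) ⟶ X)
    (hf : ∀ i, ∃ j, ∀ x, (f i).base x ∈ U j) :
    ∃ g : Spec (CommRingCat.of (∀ i, R i)) ⟶ X,
      ∀ i, Spec.map (CommRingCat.ofHom (Pi.evalRingHom R i)) ≫ g = f i := by
  choose c hc using hf
  have hsub : ∀ i, Set.range (f i).base ⊆ Set.range (hU (c i)).fromSpec.base := by
    intro i
    rw [(hU (c i)).range_fromSpec]
    rintro _ ⟨x, rfl⟩
    exact hc i x
  let l : ∀ i, Spec (CommRingCat.of (R i)) ⟶ Spec Γ(X, U (c i)) := fun i =>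
    IsOpenImmersion.lift (hU (c i)).fromSpec (f i) (hsub i)
  have hl : ∀ i, l i ≫ (hU (c i)).fromSpec = f i := fun i =>
    IsOpenImmersion.lift_fac _ _ (hsub i)
  let φ : ∀ i, Γ(X, U (c i)) ⟶ CommRingCat.of (R i) := fun i => Spec.preimage (l i)
  have hφ : ∀ i, Spec.map (φ i) = l i := fun i => Spec.map_preimage (l i)
  let S : Fin n → CommRingCat := fun j => .of (∀ i : {i // c i = j}, R i.1)
  let ψ : ∀ j, Γ(X, U j) ⟶ S j := fun j =>
    CommRingCat.ofHom (Pi.ringHom fun i => (eqToHom (by rw [i.2]) ≫ φ i.1 : Γ(X, U j) ⟶ _).hom)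
  let eh : CommRingCat.of (∀ j, S j) ⟶ CommRingCat.of (∀ i, R i) :=
    CommRingCat.ofHom (Pi.ringHom fun i =>
      (Pi.evalRingHom _ (⟨i, rfl⟩ : {i' // c i' = c i})).comp (Pi.evalRingHom (fun j => S j) (c i)))
  refine ⟨Spec.map eh ≫
    inv (sigmaSpec S) ≫ Sigma.desc (fun j => Spec.map (ψ j) ≫ (hU j).fromSpec), ?_⟩
  intro i
  have key : eh ≫ CommRingCat.ofHom (Pi.evalRingHom R i) =
      CommRingCat.ofHom (Pi.evalRingHom (fun j => S j) (c i)) ≫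
        CommRingCat.ofHom (Pi.evalRingHom (fun i' : {i' // c i' = c i} => R i'.1) ⟨i, rfl⟩) := rfl
  rw [← Category.assoc, ← Spec.map_comp, key, Spec.map_comp]
  have h3 : Spec.map (CommRingCat.ofHom (Pi.evalRingHom (fun j => (S j : Type)) (c i))) ≫
      inv (sigmaSpec S) = Sigma.ι (fun j => Spec (S j)) (c i) := by
    rw [← ι_sigmaSpec S (c i), Category.assoc, IsIso.hom_inv_id, Category.comp_id]
  slice_lhs 2 3 => rw [h3]
  rw [Sigma.ι_desc, ← Category.assoc, ← Spec.map_comp]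
  have key2 : ψ (c i) ≫ CommRingCat.ofHom
      (Pi.evalRingHom (fun i' : {i' // c i' = c i} => R i'.1) ⟨i, rfl⟩) = φ i := by
    ext x
    show (eqToHom _ ≫ φ i).hom x = (φ i).hom x
    rw [eqToHom_refl, Category.id_comp]
  rw [key2, hφ, hl]
end
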